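/- Let J be a nonempty finite set of positive integers and Φ = {β ∈ ℚ : 0 < β ≤ 1 and β·v ∈ ℤ for some v ∈ J}. Suppose β′ ∈ Φ ∪ {0} and β ∈ Φ satisfy β′ < β and no element of Φ lies strictly between β′ and β; write β = p/n in lowest terms. Then for every v ∈ J: if n ∣ v then ⌊β′·v⌋ = ⌊β·v⌋ − 1, and if n ∤ v then ⌊β′·v⌋ = ⌊β·v⌋, where ⌊·⌋ denotes the integer floor of a rational number. -/
import Mathlib


/-- Equation (4.27) of the paper: if `β' < β` are consecutive elements of `Φ ∪ {0}`
(with `Φ` as in equation (2.18)) and `β = p/n` in lowest terms, then for `v ∈ J`,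
`⌊β'v⌋ = ⌊βv⌋ - 1` when `n ∣ v`, and `⌊β'v⌋ = ⌊βv⌋` otherwise. -/
theorem stmt6 (J : Finset ℕ) (hJne : J.Nonempty) (hJpos : ∀ v ∈ J, 0 < v)
    (β' β : ℚ)
    (hβ' : β' ∈ insert (0 : ℚ)
      {γ : ℚ | 0 < γ ∧ γ ≤ 1 ∧ ∃ v ∈ J, ∃ m : ℤ, γ * (v : ℚ) = (m : ℚ)})
    (hβ : β ∈ {γ : ℚ | 0 < γ ∧ γ ≤ 1 ∧ ∃ v ∈ J, ∃ m : ℤ, γ * (v : ℚ) = (m : ℚ)})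
    (hlt : β' < β)
    (hgap : ∀ γ ∈ {γ : ℚ | 0 < γ ∧ γ ≤ 1 ∧ ∃ v ∈ J, ∃ m : ℤ, γ * (v : ℚ) = (m : ℚ)},
      ¬(β' < γ ∧ γ < β)) :
    ∀ v ∈ J,
      (β.den ∣ v → ⌊β' * (v : ℚ)⌋ = ⌊β * (v : ℚ)⌋ - 1) ∧
      (¬β.den ∣ v → ⌊β' * (v : ℚ)⌋ = ⌊β * (v : ℚ)⌋) := by
  intro v hv
  have hvpos : 0 < v := hJpos v hv
  have hvQ : (0:ℚ) < (v:ℚ) := by exact_mod_cast hvpos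
  obtain ⟨hβpos, hβle, _⟩ := hβ
  have hβ'0 : 0 ≤ β' := by
    rcases hβ' with h | h
    · simp [h]
    · exact le_of_lt h.1
  -- key: any fraction m/v with 0 < m and m/v < β is ≤ β'
  have key : ∀ m : ℤ, 0 < m → (m:ℚ)/v < β → (m:ℚ)/v ≤ β' := by
    intro m hm hmb
    by_contra hcon
    push_neg at hcon
    refine hgap ((m:ℚ)/v) ⟨?_, le_trans (le_of_lt hmb) hβle, v, hv, m, ?_⟩ ⟨hcon, hmb⟩
    · positivity
    · field_simp
  constructor
  · -- case β.den ∣ v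
    rintro ⟨t, rfl⟩
    have htpos : 0 < t := by
      rcases Nat.eq_zero_or_pos t with h | h
      · simp [h] at hvpos
      · exact h
    have hbn : β * ((β.den * t : ℕ) : ℚ) = ((β.num * t : ℤ) : ℚ) := by
      push_cast
      rw [← mul_assoc, Rat.mul_den_eq_num]
    have hnum : 0 < β.num := Rat.num_pos.2 hβpos
    have hk : (0:ℤ) < β.num * t := by positivity
    have hfl : ⌊β * ((β.den * t : ℕ) : ℚ)⌋ = β.num * t := by
      rw [hbn, Int.floor_intCast]
    rw [hfl]
    have hup : ⌊β' * ((β.den * t : ℕ) : ℚ)⌋ < β.num * t := by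
      rw [Int.floor_lt, ← hbn]
      exact mul_lt_mul_of_pos_right hlt hvQ
    have hlow : (β.num * t - 1 : ℤ) ≤ ⌊β' * ((β.den * t : ℕ) : ℚ)⌋ := by
      rw [Int.le_floor]
      rcases lt_or_ge (0:ℤ) (β.num * t - 1) with hm | hm
      · have := key (β.num * t - 1) hm (by
          rw [div_lt_iff₀ hvQ, hbn]
          exact_mod_cast sub_one_lt _)
        rw [div_le_iff₀ hvQ] at this
        linarith [mul_comm β' ((↑(β.den * t) : ℚ))]
      · have h0 : ((β.num * t - 1 : ℤ):ℚ) ≤ 0 := by exact_mod_cast hm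
        have : (0:ℚ) ≤ β' * ((β.den * t : ℕ) : ℚ) := by positivity
        linarith
    omega
  · -- case ¬ β.den ∣ v
    intro hnd
    set k := ⌊β * (v : ℚ)⌋ with hk
    have hklt : (k:ℚ) < β * v := by
      rcases lt_or_eq_of_le (Int.floor_le (β * (v:ℚ))) with h | h
      · exact h
      · exfalso
        apply hnd
        -- β * v = k, so β.num * v = k * β.den hence β.den ∣ v
        have hnum : β.num * v = k * β.den := by
          have h2 : (β.num : ℚ) * v = (k : ℚ) * β.den := by
            have hden : (β.den : ℚ) ≠ 0 := by
              exact_mod_cast Nat.cast_ne_zero.2 β.den_nz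
            have hβeq : (β.num : ℚ) = β * β.den := (Rat.mul_den_eq_num β).symm
            rw [hβeq]
            rw [mul_comm β (β.den:ℚ), mul_assoc, ← h]
            ring
          exact_mod_cast h2
        have hdvd : (β.den : ℤ) ∣ β.num * v := ⟨k, by linarith [hnum]⟩
        have hcop : IsCoprime (β.den : ℤ) β.num := by
          rw [Int.isCoprime_iff_gcd_eq_one]
          simp only [Int.gcd, Int.natAbs_natCast]
          exact (β.reduced).symm
        have : (β.den : ℤ) ∣ (v : ℤ) := hcop.dvd_of_dvd_mul_left hdvd
        exact_mod_cast this
    have hup : ⌊β' * (v : ℚ)⌋ ≤ k := by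
      refine Int.floor_le_floor ?_ |>.trans_eq hk.symm |>.trans (le_refl k)
      exact le_of_lt (mul_lt_mul_of_pos_right hlt hvQ)
    have hlow : k ≤ ⌊β' * (v : ℚ)⌋ := by
      rw [Int.le_floor]
      rcases lt_or_ge (0:ℤ) k with hm | hm
      · have := key k hm (by rw [div_lt_iff₀ hvQ]; linarith)
        rw [div_le_iff₀ hvQ] at this
        linarith
      · have h0 : ((k : ℤ):ℚ) ≤ 0 := by exact_mod_cast hm
        have : (0:ℚ) ≤ β' * (v : ℚ) := by positivity
        linarith
    omega
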